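/- Let α ∈ (0,1] and C₁ > 0. Let D be a probability distribution on ℝ^d with finite fourth moments, mean μ, and covariance matrix Σ, and suppose that for every symmetric d×d matrix B: Var_{X∼D}[XᵀBX] ≤ C₁·(‖Σ^{1/2} B Σ^{1/2}‖_F² + ‖Σ^{1/2} B μ‖₂²). Let H be a d×d positive semidefinite matrix such that ‖H^{†/2} Σ H^{†/2}‖_op ≤ 3/α and ‖H^{†/2} μ‖₂² ≤ 3/α. Then for every symmetric d×d matrix A with ‖A‖_F = 1: Var_{X∼D}[(H^{†/2} X)ᵀ A (H^{†/2} X)] ≤ 18·C₁/α². -/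

import Mathlib

open Matrix MeasureTheory ProbabilityTheory

noncomputable section

/-- The positive semidefinite square root of a positive semidefinite matrix
(the definition `Matrix.PosSemidef.sqrt` of the older Mathlib, since removed). -/
def Matrix.PosSemidef.sqrt {n 𝕜 : Type*} [Fintype n] [DecidableEq n] [RCLike 𝕜]
    [PartialOrder 𝕜] [StarOrderedRing 𝕜]
    {A : Matrix n n 𝕜} (hA : A.PosSemidef) : Matrix n n 𝕜 :=
  hA.1.eigenvectorUnitary.1 * Matrix.diagonal ((↑) ∘ (Real.sqrt ·) ∘ hA.1.eigenvalues) *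
    (star hA.1.eigenvectorUnitary : Matrix n n 𝕜)

theorem Matrix.PosSemidef.sqrt_isHermitian' {d : ℕ} {Sig : Matrix (Fin d) (Fin d) ℝ}
    (hSig : Sig.PosSemidef) : (hSig.sqrt)ᴴ = hSig.sqrt := by
  simp [Matrix.PosSemidef.sqrt, Matrix.star_eq_conjTranspose, Matrix.conjTranspose_mul,
    Matrix.diagonal_conjTranspose, Matrix.mul_assoc]

theorem Matrix.PosSemidef.sqrt_mul_self {d : ℕ} {Sig : Matrix (Fin d) (Fin d) ℝ}
    (hSig : Sig.PosSemidef) : hSig.sqrt * hSig.sqrt = Sig := by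
  have hU : (star hSig.1.eigenvectorUnitary : Matrix (Fin d) (Fin d) ℝ) *
      (hSig.1.eigenvectorUnitary : Matrix (Fin d) (Fin d) ℝ) = 1 :=
    Unitary.coe_star_mul_self _
  have hD : Matrix.diagonal ((RCLike.ofReal : ℝ → ℝ) ∘ (Real.sqrt ·) ∘ hSig.1.eigenvalues) *
      Matrix.diagonal ((RCLike.ofReal : ℝ → ℝ) ∘ (Real.sqrt ·) ∘ hSig.1.eigenvalues) =
      Matrix.diagonal (RCLike.ofReal ∘ hSig.1.eigenvalues : Fin d → ℝ) := by
    rw [Matrix.diagonal_mul_diagonal]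
    congr 1
    funext k
    simp [Real.mul_self_sqrt (hSig.eigenvalues_nonneg k)]
  conv_rhs => rw [hSig.1.spectral_theorem, Unitary.conjStarAlgAut_apply]
  unfold Matrix.PosSemidef.sqrt
  calc _ = (hSig.1.eigenvectorUnitary : Matrix (Fin d) (Fin d) ℝ) *
        Matrix.diagonal ((RCLike.ofReal : ℝ → ℝ) ∘ (Real.sqrt ·) ∘ hSig.1.eigenvalues) *
        ((star hSig.1.eigenvectorUnitary : Matrix (Fin d) (Fin d) ℝ) *
        (hSig.1.eigenvectorUnitary : Matrix (Fin d) (Fin d) ℝ)) *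
        Matrix.diagonal ((RCLike.ofReal : ℝ → ℝ) ∘ (Real.sqrt ·) ∘ hSig.1.eigenvalues) *
        (star hSig.1.eigenvectorUnitary : Matrix (Fin d) (Fin d) ℝ) := by
          simp only [Matrix.mul_assoc]
    _ = _ := by rw [hU, Matrix.mul_one, Matrix.mul_assoc _ _ (Matrix.diagonal _), hD]

namespace ListDecCov

/-- Frobenius norm of a square real matrix. -/
def frobNorm {d : ℕ} (M : Matrix (Fin d) (Fin d) ℝ) : ℝ :=
  Real.sqrt (∑ i, ∑ j, (M i j) ^ 2)

/-- Operator (spectral) norm of a square real matrix. -/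
def opNorm {d : ℕ} (M : Matrix (Fin d) (Fin d) ℝ) : ℝ :=
  ‖Matrix.toEuclideanCLM (𝕜 := ℝ) M‖

/-- Euclidean (ℓ²) norm of a vector. -/
def vecNorm {d : ℕ} (v : Fin d → ℝ) : ℝ :=
  Real.sqrt (∑ i, (v i) ^ 2)

/-- The four Penrose equations characterizing the Moore–Penrose pseudoinverse. -/
def IsMoorePenrose {d : ℕ} (H Hd : Matrix (Fin d) (Fin d) ℝ) : Prop :=
  H * Hd * H = H ∧ Hd * H * Hd = Hd ∧ (H * Hd)ᵀ = H * Hd ∧ (Hd * H)ᵀ = Hd * H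

/-- Average of `f` over a finite set. -/
def fAvg {X V : Type*} [AddCommMonoid V] [Module ℝ V] (A : Finset X) (f : X → V) : V :=
  (A.card : ℝ)⁻¹ • ∑ x ∈ A, f x

/-- Average of `f` over a multiset. -/
def msAvg {X V : Type*} [AddCommMonoid V] [Module ℝ V] (T : Multiset X) (f : X → V) : V :=
  (T.card : ℝ)⁻¹ • (T.map f).sum

/-- Empirical covariance matrix of `f x`, `x` ranging over a finite set. -/
def fCov {X : Type*} {d : ℕ} (A : Finset X) (f : X → (Fin d → ℝ)) :
    Matrix (Fin d) (Fin d) ℝ :=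
  fAvg A (fun x => Matrix.vecMulVec (f x) (f x)) - Matrix.vecMulVec (fAvg A f) (fAvg A f)

/-- Empirical covariance matrix of `f x`, `x` ranging over a multiset. -/
def msCov {X : Type*} {d : ℕ} (T : Multiset X) (f : X → (Fin d → ℝ)) :
    Matrix (Fin d) (Fin d) ℝ :=
  msAvg T (fun x => Matrix.vecMulVec (f x) (f x)) - Matrix.vecMulVec (msAvg T f) (msAvg T f)

/-- Empirical variance of `g x`, `x` ranging over a finite set. -/
def fVar {X : Type*} (A : Finset X) (g : X → ℝ) : ℝ :=
  fAvg A fun x => (g x - fAvg A g) ^ 2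

/-- Empirical variance of `g x`, `x` ranging over a multiset. -/
def msVar {X : Type*} (T : Multiset X) (g : X → ℝ) : ℝ :=
  msAvg T fun x => (g x - msAvg T g) ^ 2

/-- The `k`-th smallest element (1-indexed) of a multiset of reals. -/
def kthSmallest (s : Multiset ℝ) (k : ℕ) : ℝ :=
  (s.sort (· ≤ ·)).getD (k - 1) 0

/-- Median (the `⌈m/2⌉`-th smallest element) of a multiset of reals of size `m`. -/
def msMedian (s : Multiset ℝ) : ℝ :=
  kthSmallest s ((Multiset.card s + 1) / 2)

/-- Conditions (L.1)–(L.2) of stability, with respect to mean `μ`, covariance `Sig`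
(with psd square root `sqrtSig`) and parameter `ε`. -/
def SatisfiesL12 {d : ℕ} (μ : Fin d → ℝ) (Sig sqrtSig : Matrix (Fin d) (Fin d) ℝ) (ε : ℝ)
    (A : Finset (Fin d → ℝ)) : Prop :=
  ∀ A' ⊆ A, (1 - ε) * (A.card : ℝ) ≤ (A'.card : ℝ) →
    (∀ v : Fin d → ℝ,
        |fAvg A' (fun x => v ⬝ᵥ (x - μ))| ≤ 0.1 * Real.sqrt (v ⬝ᵥ Sig.mulVec v)) ∧
    (∀ U : Matrix (Fin d) (Fin d) ℝ, U.IsSymm →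
        |Matrix.trace ((fAvg A' (fun x => Matrix.vecMulVec (x - μ) (x - μ)) - Sig) * U)|
          ≤ 0.1 * frobNorm (sqrtSig * U * sqrtSig))

end ListDecCov

namespace ListDecCov


section Aux
set_option synthInstance.maxHeartbeats 1000000
set_option maxHeartbeats 1000000
variable {d : ℕ}

lemma vecNorm_eq (v : Fin d → ℝ) : vecNorm v = ‖(WithLp.equiv 2 (Fin d → ℝ)).symm v‖ := by
  rw [EuclideanSpace.norm_eq, vecNorm]
  congr 1
  simp [sq_abs]

lemma vecNorm_nonneg (v : Fin d → ℝ) : 0 ≤ vecNorm v := Real.sqrt_nonneg _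

lemma opNorm_nonneg (M : Matrix (Fin d) (Fin d) ℝ) : 0 ≤ opNorm M := norm_nonneg _

lemma vecNorm_mulVec_le (M : Matrix (Fin d) (Fin d) ℝ) (v : Fin d → ℝ) :
    vecNorm (M.mulVec v) ≤ opNorm M * vecNorm v := by
  rw [vecNorm_eq, vecNorm_eq]
  have h : (WithLp.equiv 2 (Fin d → ℝ)).symm (M *ᵥ v) =
      Matrix.toEuclideanCLM (𝕜 := ℝ) M ((WithLp.equiv 2 (Fin d → ℝ)).symm v) := by
    rfl
  rw [h]
  exact (Matrix.toEuclideanCLM (𝕜 := ℝ) M).le_opNorm _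

lemma sq_vecNorm (v : Fin d → ℝ) : vecNorm v ^ 2 = ∑ i, (v i) ^ 2 := by
  rw [vecNorm, Real.sq_sqrt]
  positivity

lemma frobNorm_nonneg (M : Matrix (Fin d) (Fin d) ℝ) : 0 ≤ frobNorm M := Real.sqrt_nonneg _

lemma sq_frobNorm (M : Matrix (Fin d) (Fin d) ℝ) : frobNorm M ^ 2 = ∑ i, ∑ j, (M i j) ^ 2 := by
  rw [frobNorm, Real.sq_sqrt]
  positivity

lemma frobNorm_transpose (M : Matrix (Fin d) (Fin d) ℝ) : frobNorm Mᵀ = frobNorm M := by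
  rw [frobNorm, frobNorm, Finset.sum_comm]
  rfl

lemma opNorm_transpose (M : Matrix (Fin d) (Fin d) ℝ) : opNorm Mᵀ = opNorm M := by
  have : (Mᵀ : Matrix (Fin d) (Fin d) ℝ) = star M := rfl
  rw [opNorm, opNorm, this, map_star, ContinuousLinearMap.star_eq_adjoint]
  exact ContinuousLinearMap.adjoint.norm_map _

lemma opNorm_transpose_mul_self (M : Matrix (Fin d) (Fin d) ℝ) :
    opNorm (Mᵀ * M) = opNorm M ^ 2 := by
  have : (Mᵀ : Matrix (Fin d) (Fin d) ℝ) = star M := rfl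
  rw [opNorm, opNorm, this, _root_.map_mul, map_star, ContinuousLinearMap.star_eq_adjoint, sq]
  exact ContinuousLinearMap.norm_adjoint_comp_self _

lemma frobNorm_mul_le_left (M N : Matrix (Fin d) (Fin d) ℝ) :
    frobNorm (M * N) ≤ opNorm M * frobNorm N := by
  have key : ∀ j, ∑ i, ((M * N) i j) ^ 2 ≤ opNorm M ^ 2 * ∑ i, (N i j) ^ 2 := by
    intro j
    have h := vecNorm_mulVec_le M (fun k => N k j)
    have h2 := pow_le_pow_left₀ (vecNorm_nonneg _) h 2
    rw [sq_vecNorm, mul_pow, sq_vecNorm] at h2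
    have hcol : ∀ i, (M *ᵥ fun k => N k j) i = (M * N) i j := by
      intro i
      simp [Matrix.mulVec, Matrix.mul_apply, dotProduct]
    calc ∑ i, ((M * N) i j) ^ 2 = ∑ i, ((M *ᵥ fun k => N k j) i) ^ 2 := by
          simp_rw [hcol]
      _ ≤ opNorm M ^ 2 * ∑ i, (N i j) ^ 2 := h2
  have hsq : frobNorm (M * N) ^ 2 ≤ (opNorm M * frobNorm N) ^ 2 := by
    rw [sq_frobNorm, mul_pow, sq_frobNorm]
    calc ∑ i, ∑ j, ((M * N) i j) ^ 2 = ∑ j, ∑ i, ((M * N) i j) ^ 2 := Finset.sum_comm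
      _ ≤ ∑ j, opNorm M ^ 2 * ∑ i, (N i j) ^ 2 := Finset.sum_le_sum fun j _ => key j
      _ = opNorm M ^ 2 * ∑ i, ∑ j, (N i j) ^ 2 := by rw [← Finset.mul_sum, Finset.sum_comm]
  have h1 := Real.sqrt_le_sqrt hsq
  rwa [Real.sqrt_sq (frobNorm_nonneg _),
    Real.sqrt_sq (mul_nonneg (opNorm_nonneg _) (frobNorm_nonneg _))] at h1

lemma frobNorm_mul_le_right (M N : Matrix (Fin d) (Fin d) ℝ) :
    frobNorm (M * N) ≤ frobNorm M * opNorm N := by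
  have h : frobNorm (M * N) = frobNorm (Nᵀ * Mᵀ) := by
    rw [← Matrix.transpose_mul, frobNorm_transpose]
  rw [h, mul_comm]
  calc frobNorm (Nᵀ * Mᵀ) ≤ opNorm Nᵀ * frobNorm Mᵀ := frobNorm_mul_le_left _ _
    _ = opNorm N * frobNorm M := by rw [opNorm_transpose, frobNorm_transpose]

lemma vecNorm_mulVec_le_frob (M : Matrix (Fin d) (Fin d) ℝ) (v : Fin d → ℝ) :
    vecNorm (M.mulVec v) ≤ frobNorm M * vecNorm v := by
  have hsq : vecNorm (M *ᵥ v) ^ 2 ≤ (frobNorm M * vecNorm v) ^ 2 := by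
    rw [sq_vecNorm, mul_pow, sq_frobNorm, sq_vecNorm, Finset.sum_mul]
    refine Finset.sum_le_sum fun i _ => ?_
    have : (M *ᵥ v) i = ∑ j, M i j * v j := by
      simp [Matrix.mulVec, dotProduct]
    rw [this]
    exact Finset.sum_mul_sq_le_sq_mul_sq _ _ _
  have h1 := Real.sqrt_le_sqrt hsq
  rwa [Real.sqrt_sq (vecNorm_nonneg _),
    Real.sqrt_sq (mul_nonneg (frobNorm_nonneg _) (vecNorm_nonneg _))] at h1

end Aux

set_option maxHeartbeats 2000000 in
set_option synthInstance.maxHeartbeats 1000000 in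
/-- if a distribution `D` (with mean `μ`, covariance `Σ`, finite fourth
moments) has bounded variance of quadratic forms, and `H` is PSD with
`‖H^{†/2} Σ H^{†/2}‖_op ≤ 3/α` and `‖H^{†/2} μ‖₂² ≤ 3/α`, then for every symmetric `A`
with `‖A‖_F = 1` the variance of `(H^{†/2} X)ᵀ A (H^{†/2} X)` is at most `18 C₁/α²`.
Here `W` plays the role of `H^{†/2}`. -/
theorem statement7 (d : ℕ) (α C₁ : ℝ) (hα : α ∈ Set.Ioc (0 : ℝ) 1) (hC₁ : 0 < C₁)
    (D : MeasureTheory.Measure (Fin d → ℝ)) [MeasureTheory.IsProbabilityMeasure D]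
    (hmom : ∀ i, MeasureTheory.MemLp (fun x => x i) 4 D)
    (μ : Fin d → ℝ) (Sig : Matrix (Fin d) (Fin d) ℝ) (hSig : Sig.PosSemidef)
    (hmean : ∀ i, ∫ x, x i ∂D = μ i)
    (hcov : ∀ i j, ∫ x, (x i - μ i) * (x j - μ j) ∂D = Sig i j)
    (hvar : ∀ B : Matrix (Fin d) (Fin d) ℝ, B.IsSymm →
      ProbabilityTheory.variance (fun x => x ⬝ᵥ B.mulVec x) D ≤
        C₁ * (frobNorm (hSig.sqrt * B * hSig.sqrt) ^ 2 +
          vecNorm ((hSig.sqrt * B).mulVec μ) ^ 2))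
    (H W : Matrix (Fin d) (Fin d) ℝ) (hH : H.PosSemidef) (hW : W.PosSemidef)
    (hMP : IsMoorePenrose H (W * W))
    (hop : opNorm (W * Sig * W) ≤ 3 / α)
    (hmu : vecNorm (W.mulVec μ) ^ 2 ≤ 3 / α)
    (A : Matrix (Fin d) (Fin d) ℝ) (hA : A.IsSymm) (hAF : frobNorm A = 1) :
    ProbabilityTheory.variance (fun x => (W.mulVec x) ⬝ᵥ A.mulVec (W.mulVec x)) D ≤
      18 * C₁ / α ^ 2 := by
  obtain ⟨hα0, hα1⟩ := hα
  set S := hSig.sqrt with hS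
  have hSsymm : Sᵀ = S := by
    rw [← Matrix.conjTranspose_eq_transpose_of_trivial]
    exact hSig.sqrt_isHermitian'
  have hWsymm : Wᵀ = W := by
    rw [← Matrix.conjTranspose_eq_transpose_of_trivial]
    exact hW.1
  have hSS : S * S = Sig := hSig.sqrt_mul_self
  -- rewrite the quadratic form
  have hfun : (fun x => (W.mulVec x) ⬝ᵥ A.mulVec (W.mulVec x)) =
      (fun x => x ⬝ᵥ (W * A * W).mulVec x) := by
    funext x
    have key : ∀ y : Fin d → ℝ, x ⬝ᵥ W *ᵥ y = (W *ᵥ x) ⬝ᵥ y := by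
      intro y
      rw [Matrix.dotProduct_mulVec, ← Matrix.mulVec_transpose, hWsymm]
    calc (W *ᵥ x) ⬝ᵥ A *ᵥ (W *ᵥ x) = x ⬝ᵥ W *ᵥ (A *ᵥ (W *ᵥ x)) := (key _).symm
      _ = x ⬝ᵥ (W * A * W) *ᵥ x := by
          rw [Matrix.mulVec_mulVec, Matrix.mulVec_mulVec, Matrix.mul_assoc]
  have hBsymm : (W * A * W).IsSymm := by
    rw [Matrix.IsSymm, Matrix.transpose_mul, Matrix.transpose_mul, hWsymm, hA.eq,
      Matrix.mul_assoc]
  -- operator norm bound on S*W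
  have hSW2 : opNorm (S * W) ^ 2 ≤ 3 / α := by
    have h1 := opNorm_transpose_mul_self (S * W)
    have h2 : (S * W)ᵀ * (S * W) = W * Sig * W := by
      rw [Matrix.transpose_mul, hWsymm, hSsymm, Matrix.mul_assoc, ← Matrix.mul_assoc S S W,
        hSS, ← Matrix.mul_assoc]
    rw [h2] at h1
    rw [← h1]
    exact hop
  have hWS : opNorm (W * S) = opNorm (S * W) := by
    rw [← opNorm_transpose (S * W), Matrix.transpose_mul, hWsymm, hSsymm]
  have h3α : (0:ℝ) ≤ 3 / α := by positivity
  -- Frobenius term bound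
  have hfrob : frobNorm (S * (W * A * W) * S) ≤ 3 / α := by
    have e : S * (W * A * W) * S = (S * W) * (A * (W * S)) := by
      simp only [Matrix.mul_assoc]
    rw [e]
    calc frobNorm ((S * W) * (A * (W * S)))
        ≤ opNorm (S * W) * frobNorm (A * (W * S)) := frobNorm_mul_le_left _ _
      _ ≤ opNorm (S * W) * (frobNorm A * opNorm (W * S)) :=
          mul_le_mul_of_nonneg_left (frobNorm_mul_le_right _ _) (opNorm_nonneg _)
      _ = opNorm (S * W) ^ 2 := by rw [hAF, hWS]; ring
      _ ≤ 3 / α := hSW2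
  -- vector term bound
  have hvecsq : vecNorm ((S * (W * A * W)).mulVec μ) ^ 2 ≤ 3 / α * (3 / α) := by
    have em : S * (W * A * W) = (S * W) * (A * W) := by
      simp only [Matrix.mul_assoc]
    have e : (S * (W * A * W)) *ᵥ μ = (S * W) *ᵥ (A *ᵥ (W *ᵥ μ)) := by
      rw [Matrix.mulVec_mulVec, Matrix.mulVec_mulVec, em]
      simp only [Matrix.mul_assoc]
    have hv1 : vecNorm ((S * (W * A * W)) *ᵥ μ) ≤ opNorm (S * W) * vecNorm (W *ᵥ μ) := by
      rw [e]
      calc vecNorm ((S * W) *ᵥ (A *ᵥ (W *ᵥ μ)))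
          ≤ opNorm (S * W) * vecNorm (A *ᵥ (W *ᵥ μ)) := vecNorm_mulVec_le _ _
        _ ≤ opNorm (S * W) * (frobNorm A * vecNorm (W *ᵥ μ)) :=
            mul_le_mul_of_nonneg_left (vecNorm_mulVec_le_frob _ _) (opNorm_nonneg _)
        _ = opNorm (S * W) * vecNorm (W *ᵥ μ) := by rw [hAF, one_mul]
    have hv2 := pow_le_pow_left₀ (vecNorm_nonneg _) hv1 2
    rw [mul_pow] at hv2
    refine hv2.trans ?_
    exact mul_le_mul hSW2 hmu (sq_nonneg _) h3α
  -- put it together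
  rw [hfun]
  have hmain := hvar (W * A * W) hBsymm
  refine hmain.trans ?_
  have hfrobsq : frobNorm (hSig.sqrt * (W * A * W) * hSig.sqrt) ^ 2 ≤ 3 / α * (3 / α) :=
    pow_le_pow_left₀ (frobNorm_nonneg _) hfrob 2 |>.trans_eq (by ring)
  have hsum : frobNorm (hSig.sqrt * (W * A * W) * hSig.sqrt) ^ 2 +
      vecNorm ((hSig.sqrt * (W * A * W)).mulVec μ) ^ 2 ≤ 18 / α ^ 2 := by
    have h := add_le_add hfrobsq hvecsq
    refine h.trans_eq ?_
    field_simp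
    ring
  calc C₁ * (frobNorm (hSig.sqrt * (W * A * W) * hSig.sqrt) ^ 2 +
        vecNorm ((hSig.sqrt * (W * A * W)).mulVec μ) ^ 2)
      ≤ C₁ * (18 / α ^ 2) := mul_le_mul_of_nonneg_left hsum hC₁.le
    _ = 18 * C₁ / α ^ 2 := by ring


end ListDecCov
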